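/- arXiv:1808.01505 — 5 statements merged into one kernel-verified Lean document; each statement's English description precedes it below -/
import Mathlib

section
/- Let ζ ∈ ℂ³ with ζ·ζ = 0 and |ζ| ≠ 0, let ζ̂ = ζ/|ζ|, and set b = (λ⁰+μ⁰) Re(ζ̂), c = −((λ⁰+3μ⁰)/|ζ|) Re(ζ̂). Then u(x) = ((b·x) ζ̂ + c) e^{ζ·x} satisfies μ⁰ Δu + (λ⁰+μ⁰) ∇(∇·u) = 0. -/
open Complex

/-- Partial derivative in the j-th coordinate direction. -/
noncomputable def pd (j : Fin 3) (f : (Fin 3 → ℝ) → ℂ) : (Fin 3 → ℝ) → ℂ :=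
  fun x => fderiv ℝ f x (Pi.single j 1)

/-- Hermitian norm of a vector in ℂ³. -/
noncomputable def hnorm (ζ : Fin 3 → ℂ) : ℝ :=
  Real.sqrt (∑ j : Fin 3, Complex.normSq (ζ j))

noncomputable def Dlin (a : Fin 3 → ℂ) : (Fin 3 → ℝ) →L[ℝ] ℂ :=
  ∑ j : Fin 3, a j • (Complex.ofRealCLM.comp (ContinuousLinearMap.proj j))

lemma Dlin_apply (a : Fin 3 → ℂ) (k : Fin 3) : Dlin a (Pi.single k 1) = a k := by
  simp [Dlin, ContinuousLinearMap.sum_apply, Pi.single_apply, apply_ite]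

lemma hasFDerivAt_lin (a : Fin 3 → ℂ) (B : ℂ) (x : Fin 3 → ℝ) :
    HasFDerivAt (fun x : Fin 3 → ℝ => (∑ j : Fin 3, a j * (x j : ℂ)) + B) (Dlin a) x := by
  have h : ∀ j : Fin 3, HasFDerivAt (fun x : Fin 3 → ℝ => a j * (x j : ℂ))
      (a j • (Complex.ofRealCLM.comp (ContinuousLinearMap.proj j))) x := by
    intro j
    exact ((Complex.ofRealCLM.comp (ContinuousLinearMap.proj j)).hasFDerivAt (x := x)).const_mul (a j)
  have := (HasFDerivAt.sum (fun j (_ : j ∈ Finset.univ) => h j)).add_const B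
  simpa [Dlin] using this

noncomputable def F (a : Fin 3 → ℂ) (B : ℂ) (ζ : Fin 3 → ℂ) : (Fin 3 → ℝ) → ℂ :=
  fun x => ((∑ j : Fin 3, a j * (x j : ℂ)) + B) * Complex.exp (∑ j : Fin 3, ζ j * (x j : ℂ))

lemma hasFDerivAt_F (a : Fin 3 → ℂ) (B : ℂ) (ζ : Fin 3 → ℂ) (x : Fin 3 → ℝ) :
    HasFDerivAt (F a B ζ)
      (((∑ j : Fin 3, a j * (x j : ℂ)) + B) •
          (Complex.exp (∑ j : Fin 3, ζ j * (x j : ℂ)) • Dlin ζ)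
        + Complex.exp (∑ j : Fin 3, ζ j * (x j : ℂ)) • Dlin a) x := by
  have h1 := hasFDerivAt_lin a B x
  have h2' : HasFDerivAt (fun x : Fin 3 → ℝ => ∑ j : Fin 3, ζ j * (x j : ℂ)) (Dlin ζ) x := by
    simpa using hasFDerivAt_lin ζ 0 x
  exact h1.mul h2'.cexp

lemma pd_F (a : Fin 3 → ℂ) (B : ℂ) (ζ : Fin 3 → ℂ) (k : Fin 3) :
    pd k (F a B ζ) = F (fun j => ζ k * a j) (a k + ζ k * B) ζ := by
  funext x
  have h := (hasFDerivAt_F a B ζ x).fderiv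
  simp only [pd, h]
  simp only [ContinuousLinearMap.add_apply, ContinuousLinearMap.smul_apply, Dlin_apply,
    smul_eq_mul, F]
  rw [Finset.sum_congr rfl (fun j _ => mul_assoc (ζ k) (a j) ((x j : ℂ))), ← Finset.mul_sum]
  ring

lemma sum_F (a : Fin 3 → Fin 3 → ℂ) (B : Fin 3 → ℂ) (ζ : Fin 3 → ℂ) (y : Fin 3 → ℝ) :
    (∑ j : Fin 3, F (a j) (B j) ζ y) = F (fun m => ∑ j : Fin 3, a j m) (∑ j, B j) ζ y := by
  simp only [F, ← Finset.sum_mul]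
  congr 1
  rw [Finset.sum_add_distrib, Finset.sum_comm]
  simp [Finset.sum_mul]

/-- let ζ·ζ = 0, |ζ| ≠ 0, ζ̂ = ζ/|ζ|, b = (λ⁰+μ⁰)Re(ζ̂),
c = −((λ⁰+3μ⁰)/|ζ|)Re(ζ̂). Then u(x) = ((b·x)ζ̂ + c)e^{ζ·x} solves
μ⁰Δu + (λ⁰+μ⁰)∇(∇·u) = 0. -/
theorem stmt_4 (lam0 mu0 : ℝ) (ζ : Fin 3 → ℂ)
    (hζ : (∑ j : Fin 3, ζ j * ζ j) = 0)
    (hζ0 : hnorm ζ ≠ 0)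
    (ζhat : Fin 3 → ℂ) (hζhat : ζhat = fun j => ζ j / (hnorm ζ : ℂ))
    (b c : Fin 3 → ℝ)
    (hb : b = fun j => (lam0 + mu0) * (ζhat j).re)
    (hc : c = fun j => -((lam0 + 3 * mu0) / hnorm ζ) * (ζhat j).re)
    (u : (Fin 3 → ℝ) → Fin 3 → ℂ)
    (hu : u = fun x l =>
      ((∑ j : Fin 3, (b j : ℂ) * (x j : ℂ)) * ζhat l + (c l : ℂ))
        * Complex.exp (∑ j : Fin 3, ζ j * (x j : ℂ))) :
    ∀ x : Fin 3 → ℝ, ∀ i : Fin 3,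
      (mu0 : ℂ) * (∑ j : Fin 3, pd j (pd j (fun y => u y i)) x)
        + ((lam0 : ℂ) + (mu0 : ℂ))
            * pd i (fun y => ∑ j : Fin 3, pd j (fun z => u z j) y) x = 0 := by
  intro x i
  set H : ℝ := hnorm ζ with hH
  have hHC : (H : ℂ) ≠ 0 := by exact_mod_cast hζ0
  have hH2 : (H : ℝ) ^ 2 = ∑ j : Fin 3, Complex.normSq (ζ j) := by
    rw [hH, hnorm, Real.sq_sqrt]
    exact Finset.sum_nonneg fun j _ => Complex.normSq_nonneg _
  -- key scalar identities
  have K1 : (∑ j : Fin 3, ζhat j * ζhat j) = 0 := by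
    simp only [hζhat, div_mul_div_comm, ← Finset.sum_div, hζ, zero_div]
  have Kn : (∑ j : Fin 3, ζhat j * (starRingEnd ℂ) (ζhat j)) = 1 := by
    simp only [hζhat, Complex.mul_conj]
    have : ∀ j : Fin 3, Complex.normSq (ζ j / (H : ℂ)) = Complex.normSq (ζ j) / H ^ 2 := by
      intro j
      rw [Complex.normSq_div]
      norm_num [Complex.normSq_ofReal, sq]
    rw [Finset.sum_congr rfl (fun j _ => by rw [this j])]
    have hre : (∑ j : Fin 3, Complex.normSq (ζ j) / H ^ 2) = 1 := by
      rw [← Finset.sum_div, ← hH2]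
      field_simp
    exact_mod_cast hre
  have K2 : (∑ j : Fin 3, ζhat j * ((ζhat j).re : ℂ)) = 1 / 2 := by
    have : ∀ j : Fin 3, ζhat j * ((ζhat j).re : ℂ)
        = (ζhat j * ζhat j + ζhat j * (starRingEnd ℂ) (ζhat j)) / 2 := by
      intro j
      rw [← mul_add, Complex.add_conj]
      push_cast
      ring
    rw [Finset.sum_congr rfl (fun j _ => this j), ← Finset.sum_div, Finset.sum_add_distrib,
      K1, Kn]
    norm_num
  have hzH : ∀ j, ζ j = (H : ℂ) * ζhat j := by
    intro j; rw [hζhat]; field_simp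
  have h1 : (∑ j : Fin 3, ζ j * ((b j : ℝ) : ℂ)) = ((lam0 : ℂ) + mu0) * H / 2 := by
    have : ∀ j : Fin 3, ζ j * ((b j : ℝ) : ℂ)
        = ((lam0 : ℂ) + mu0) * (H : ℂ) * (ζhat j * ((ζhat j).re : ℂ)) := by
      intro j; rw [hzH j, hb]; push_cast; ring
    rw [Finset.sum_congr rfl (fun j _ => this j), ← Finset.mul_sum, K2]; ring
  have h2 : (∑ j : Fin 3, ((b j : ℝ) : ℂ) * ζhat j) = ((lam0 : ℂ) + mu0) / 2 := by
    have : ∀ j : Fin 3, ((b j : ℝ) : ℂ) * ζhat j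
        = ((lam0 : ℂ) + mu0) * (ζhat j * ((ζhat j).re : ℂ)) := by
      intro j; rw [hb]; push_cast; ring
    rw [Finset.sum_congr rfl (fun j _ => this j), ← Finset.mul_sum, K2]; ring
  have h3 : (∑ j : Fin 3, ζ j * ((c j : ℝ) : ℂ)) = -((lam0 : ℂ) + 3 * mu0) / 2 := by
    have : ∀ j : Fin 3, ζ j * ((c j : ℝ) : ℂ)
        = -((lam0 : ℂ) + 3 * mu0) * (ζhat j * ((ζhat j).re : ℂ)) := by
      intro j
      rw [hzH j, hc]
      push_cast
      field_simp
    rw [Finset.sum_congr rfl (fun j _ => this j), ← Finset.mul_sum, K2]; ring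
  have h4 : (∑ j : Fin 3, ζ j * ζhat j) = 0 := by
    rw [Finset.sum_congr rfl (fun j _ => by rw [hzH j, mul_assoc]), ← Finset.mul_sum, K1,
      mul_zero]
  -- rewrite u in F-form
  have hui : ∀ l : Fin 3, (fun y => u y l) = F (fun j => ((b j : ℝ) : ℂ) * ζhat l) ((c l : ℝ) : ℂ) ζ := by
    intro l
    funext y
    simp only [hu, F, Finset.sum_mul]
    congr 2
    exact Finset.sum_congr rfl fun j _ => by ring
  -- second derivatives
  have hpd2 : ∀ j : Fin 3, pd j (pd j (fun y => u y i)) x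
      = F (fun m => ζ j * (ζ j * (((b m : ℝ) : ℂ) * ζhat i)))
          (ζ j * (((b j : ℝ) : ℂ) * ζhat i)
            + ζ j * (((b j : ℝ) : ℂ) * ζhat i + ζ j * ((c i : ℝ) : ℂ))) ζ x := by
    intro j
    rw [hui i, pd_F, pd_F]
  -- divergence
  have hdiv : (fun y => ∑ j : Fin 3, pd j (fun z => u z j) y)
      = F (fun m => (∑ j : Fin 3, ζ j * ζhat j) * ((b m : ℝ) : ℂ))
          (∑ j : Fin 3, (((b j : ℝ) : ℂ) * ζhat j + ζ j * ((c j : ℝ) : ℂ))) ζ := by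
    funext y
    have : ∀ j : Fin 3, pd j (fun z => u z j)
        = F (fun m => ζ j * (((b m : ℝ) : ℂ) * ζhat j))
            (((b j : ℝ) : ℂ) * ζhat j + ζ j * ((c j : ℝ) : ℂ)) ζ := by
      intro j; rw [hui j, pd_F]
    rw [Finset.sum_congr rfl (fun j _ => by rw [this j]), sum_F]
    congr 1
    funext m
    rw [Finset.sum_mul]
    exact Finset.sum_congr rfl fun j _ => by ring
  rw [Finset.sum_congr rfl (fun j _ => hpd2 j), hdiv, pd_F]
  -- now everything is explicit; expand F and finish with the identities
  simp only [F, sum_F]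
  set e : ℂ := Complex.exp (∑ j : Fin 3, ζ j * (x j : ℂ)) with he
  rw [← Finset.sum_mul]
  set P : ℂ := ∑ j : Fin 3, ((b j : ℝ) : ℂ) * (x j : ℂ) with hP
  have hζi : ζhat i = ζ i / (H : ℂ) := by rw [hζhat]
  -- expand the first big sum
  have e1 : (∑ j : Fin 3, ((∑ m : Fin 3, ζ j * (ζ j * (((b m : ℝ) : ℂ) * ζhat i)) * (x m : ℂ))
        + (ζ j * (((b j : ℝ) : ℂ) * ζhat i)
          + ζ j * (((b j : ℝ) : ℂ) * ζhat i + ζ j * ((c i : ℝ) : ℂ)))))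
      = (∑ j : Fin 3, ζ j * ζ j) * (P * ζhat i + ((c i : ℝ) : ℂ))
        + 2 * (∑ j : Fin 3, ζ j * ((b j : ℝ) : ℂ)) * ζhat i := by
    rw [Finset.sum_add_distrib]
    have : ∀ j : Fin 3, (∑ m : Fin 3, ζ j * (ζ j * (((b m : ℝ) : ℂ) * ζhat i)) * (x m : ℂ))
        = ζ j * ζ j * (P * ζhat i) := by
      intro j
      rw [hP, Finset.sum_mul, Finset.mul_sum]
      exact Finset.sum_congr rfl fun m _ => by ring
    rw [Finset.sum_congr rfl (fun j _ => this j), ← Finset.sum_mul, Finset.sum_add_distrib]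
    rw [show (∑ j : Fin 3, ζ j * (((b j : ℝ) : ℂ) * ζhat i))
        = (∑ j : Fin 3, ζ j * ((b j : ℝ) : ℂ)) * ζhat i by
      rw [Finset.sum_mul]; exact Finset.sum_congr rfl fun j _ => by ring]
    rw [show (∑ j : Fin 3, ζ j * (((b j : ℝ) : ℂ) * ζhat i + ζ j * ((c i : ℝ) : ℂ)))
        = (∑ j : Fin 3, ζ j * ((b j : ℝ) : ℂ)) * ζhat i
          + (∑ j : Fin 3, ζ j * ζ j) * ((c i : ℝ) : ℂ) by
      rw [Finset.sum_mul, Finset.sum_mul, ← Finset.sum_add_distrib]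
      exact Finset.sum_congr rfl fun j _ => by ring]
    ring
  rw [e1, hζ, h1, h4]
  have hBsum : (∑ j : Fin 3, (((b j : ℝ) : ℂ) * ζhat j + ζ j * ((c j : ℝ) : ℂ)))
      = ((lam0 : ℂ) + mu0) / 2 + (-((lam0 : ℂ) + 3 * mu0) / 2) := by
    rw [Finset.sum_add_distrib, h2, h3]
  rw [hBsum]
  simp only [zero_mul, mul_zero, zero_add, add_zero, Finset.sum_const_zero]
  rw [hζi]
  field_simp
  ring
end

section
/- Under the assumptions of the previous construction (ζ·ζ = 0, ζ̂ = ζ/|ζ|, b = (λ⁰+μ⁰)Re(ζ̂), c = −((λ⁰+3μ⁰)/|ζ|)Re(ζ̂), u(x) = ((b·x)ζ̂ + c)e^{ζ·x}), the divergence satisfies ∇·u(x) = −μ⁰ e^{ζ·x}, using the fact that Re(ζ̂)·ζ̂ = 1/2 when ζ·ζ = 0. -/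
open Complex

noncomputable def lmap (v : Fin 3 → ℂ) : (Fin 3 → ℝ) →L[ℝ] ℂ :=
  ∑ k : Fin 3, v k • (Complex.ofRealCLM.comp (ContinuousLinearMap.proj k))

lemma lmap_apply (v : Fin 3 → ℂ) (y : Fin 3 → ℝ) :
    lmap v y = ∑ k : Fin 3, v k * (y k : ℂ) := by
  simp [lmap, smul_eq_mul]

lemma lmap_single (v : Fin 3 → ℂ) (j : Fin 3) :
    lmap v (Pi.single j 1) = v j := by
  rw [lmap_apply]
  simp [Pi.single_apply, apply_ite]

lemma hasFDerivAt_lmap (v : Fin 3 → ℂ) (x : Fin 3 → ℝ) :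
    HasFDerivAt (fun y : Fin 3 → ℝ => ∑ k : Fin 3, v k * (y k : ℂ)) (lmap v) x := by
  have h : (fun y : Fin 3 → ℝ => ∑ k : Fin 3, v k * (y k : ℂ)) = fun y => lmap v y := by
    funext y; rw [lmap_apply]
  rw [h]
  exact (lmap v).hasFDerivAt

/-- with ζ·ζ = 0, ζ ≠ 0, ζ̂ = ζ/|ζ|, b = (λ⁰+μ⁰)Re(ζ̂),
c = −((λ⁰+3μ⁰)/|ζ|)Re(ζ̂) and u(x) = ((b·x)ζ̂ + c)e^{ζ·x}, one has
∇·u(x) = −μ⁰ e^{ζ·x}. -/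
theorem stmt_5 (lam0 mu0 : ℝ) (ζ : Fin 3 → ℂ)
    (hζ : (∑ j : Fin 3, ζ j * ζ j) = 0)
    (hζ0 : ζ ≠ 0)
    (ζhat : Fin 3 → ℂ) (hζhat : ζhat = fun j => ζ j / (hnorm ζ : ℂ))
    (b c : Fin 3 → ℝ)
    (hb : b = fun j => (lam0 + mu0) * (ζhat j).re)
    (hc : c = fun j => -((lam0 + 3 * mu0) / hnorm ζ) * (ζhat j).re)
    (u : (Fin 3 → ℝ) → Fin 3 → ℂ)
    (hu : u = fun x l =>
      ((∑ j : Fin 3, (b j : ℂ) * (x j : ℂ)) * ζhat l + (c l : ℂ))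
        * Complex.exp (∑ j : Fin 3, ζ j * (x j : ℂ))) :
    ∀ x : Fin 3 → ℝ,
      (∑ j : Fin 3, pd j (fun y => u y j) x)
        = -(mu0 : ℂ) * Complex.exp (∑ j : Fin 3, ζ j * (x j : ℂ)) := by
  -- basic facts about the norm
  set n : ℝ := hnorm ζ with hn
  have hnn : (0:ℝ) ≤ ∑ j : Fin 3, Complex.normSq (ζ j) :=
    Finset.sum_nonneg fun _ _ => Complex.normSq_nonneg _
  have hn2 : n ^ 2 = ∑ j : Fin 3, Complex.normSq (ζ j) := Real.sq_sqrt hnn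
  have hex : ∃ j, ζ j ≠ 0 := by
    by_contra h; push_neg at h; exact hζ0 (funext h)
  obtain ⟨j0, hj0⟩ := hex
  have hnpos : 0 < n := by
    apply Real.sqrt_pos.mpr
    exact Finset.sum_pos' (fun _ _ => Complex.normSq_nonneg _)
      ⟨j0, Finset.mem_univ _, Complex.normSq_pos.mpr hj0⟩
  have hn0 : (n : ℂ) ≠ 0 := by
    exact_mod_cast Complex.ofReal_ne_zero.mpr (ne_of_gt hnpos)
  -- real and imaginary parts of ζ·ζ = 0
  have hre : ∑ j : Fin 3, ((ζ j).re * (ζ j).re - (ζ j).im * (ζ j).im) = 0 := by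
    have := congrArg Complex.re hζ
    simpa [Complex.mul_re] using this
  have him : ∑ j : Fin 3, ((ζ j).re * (ζ j).im) = 0 := by
    have h2 := congrArg Complex.im hζ
    simp [Complex.mul_im] at h2
    have : ∑ j : Fin 3, ((ζ j).re * (ζ j).im + (ζ j).im * (ζ j).re)
        = 2 * ∑ j : Fin 3, ((ζ j).re * (ζ j).im) := by
      rw [Finset.mul_sum]; apply Finset.sum_congr rfl; intro j _; ring
    rw [this] at h2
    linarith [h2]
  -- key identity : ∑ Re(ζ j) ζ j = n²/2
  have key : ∑ j : Fin 3, ((ζ j).re : ℂ) * ζ j = ((n ^ 2 / 2 : ℝ) : ℂ) := by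
    have hre2 : ∑ j : Fin 3, ((ζ j).re * (ζ j).re) = n ^ 2 / 2 := by
      have : ∑ j : Fin 3, ((ζ j).re * (ζ j).re + (ζ j).im * (ζ j).im) = n ^ 2 := by
        rw [hn2]; apply Finset.sum_congr rfl; intro j _
        simp [Complex.normSq_apply]
      rw [Finset.sum_add_distrib] at this
      rw [Finset.sum_sub_distrib] at hre
      linarith
    apply Complex.ext
    · simp [Complex.re_sum, Complex.mul_re, ← Complex.ofReal_pow]
      simpa using hre2
    · simp [Complex.im_sum, Complex.mul_im, ← Complex.ofReal_pow]
      simpa using him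
  -- the three divergence sums
  have S1 : ∑ j : Fin 3, ζhat j * ζ j = 0 := by
    rw [hζhat]
    simp only [div_mul_eq_mul_div]
    rw [← Finset.sum_div, hζ, zero_div]
  have hre_hat : ∀ j, ((ζhat j).re : ℂ) = ((ζ j).re : ℂ) / (n : ℂ) := by
    intro j
    rw [hζhat]
    simp [Complex.div_ofReal_re]
  have key2 : ∑ j : Fin 3, ((ζhat j).re : ℂ) * ζhat j = 1 / 2 := by
    rw [hζhat]
    simp only
    have : ∀ j : Fin 3, (((ζ j / (n:ℂ)).re : ℝ) : ℂ) * (ζ j / (n:ℂ))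
        = (((ζ j).re : ℂ) * ζ j) / ((n:ℂ) * (n:ℂ)) := by
      intro j
      rw [show ((ζ j / (n:ℂ)).re : ℝ) = (ζ j).re / n by simp [Complex.div_ofReal_re]]
      push_cast
      field_simp
    rw [Finset.sum_congr rfl (fun j _ => this j), ← Finset.sum_div, key]
    push_cast
    field_simp
    try ring
  have key3 : ∑ j : Fin 3, ((ζhat j).re : ℂ) * ζ j = (n : ℂ) / 2 := by
    have : ∀ j : Fin 3, ((ζhat j).re : ℂ) * ζ j = (((ζ j).re : ℂ) * ζ j) / (n : ℂ) := by
      intro j; rw [hre_hat j]; ring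
    rw [Finset.sum_congr rfl (fun j _ => this j), ← Finset.sum_div, key]
    push_cast
    field_simp
    try ring
  have S2 : ∑ j : Fin 3, (b j : ℂ) * ζhat j = ((lam0 + mu0 : ℝ) : ℂ) / 2 := by
    rw [hb]
    simp only
    push_cast
    have : ∀ j : Fin 3, (((lam0:ℂ) + mu0) * ((ζhat j).re : ℂ)) * ζhat j
        = ((lam0:ℂ) + mu0) * (((ζhat j).re : ℂ) * ζhat j) := fun j => by ring
    rw [Finset.sum_congr rfl (fun j _ => this j), ← Finset.mul_sum, key2]
    ring
  have S3 : ∑ j : Fin 3, (c j : ℂ) * ζ j = -(((lam0 + 3 * mu0 : ℝ)) : ℂ) / 2 := by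
    rw [hc]
    simp only
    push_cast
    have : ∀ j : Fin 3, (-(((lam0:ℂ) + 3 * mu0) / (n:ℂ)) * ((ζhat j).re : ℂ)) * ζ j
        = -(((lam0:ℂ) + 3 * mu0) / (n:ℂ)) * (((ζhat j).re : ℂ) * ζ j) := fun j => by ring
    rw [Finset.sum_congr rfl (fun j _ => this j), ← Finset.mul_sum, key3]
    field_simp
    try ring
  -- compute each partial derivative
  intro x
  set Lx : ℂ := ∑ k : Fin 3, (b k : ℂ) * (x k : ℂ) with hLx
  set E : ℂ := Complex.exp (∑ k : Fin 3, ζ k * (x k : ℂ)) with hEdef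
  have hpd : ∀ j : Fin 3, pd j (fun y => u y j) x
      = (Lx * ζhat j + (c j : ℂ)) * (E * ζ j) + E * (ζhat j * (b j : ℂ)) := by
    intro j
    have hf := ((hasFDerivAt_lmap (fun k => (b k : ℂ)) x).mul_const (ζhat j)).add_const
      ((c j : ℂ))
    have hg := (hasFDerivAt_lmap ζ x).cexp
    have hU := hf.mul hg
    have heq : (fun y => u y j) = fun y : Fin 3 → ℝ =>
        ((∑ k : Fin 3, (b k : ℂ) * (y k : ℂ)) * ζhat j + (c j : ℂ))
          * Complex.exp (∑ k : Fin 3, ζ k * (y k : ℂ)) := by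
      rw [hu]
    rw [pd, heq, HasFDerivAt.fderiv (f := fun y : Fin 3 → ℝ => ((∑ k : Fin 3, (b k : ℂ) * (y k : ℂ)) * ζhat j + (c j : ℂ)) * Complex.exp (∑ k : Fin 3, ζ k * (y k : ℂ))) hU]
    simp [ContinuousLinearMap.add_apply, ContinuousLinearMap.smul_apply, lmap_single,
      smul_eq_mul, ← hLx, ← hEdef]
    try ring
  rw [Finset.sum_congr rfl (fun j _ => hpd j)]
  have expand : ∑ j : Fin 3, ((Lx * ζhat j + (c j : ℂ)) * (E * ζ j) + E * (ζhat j * (b j : ℂ)))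
      = Lx * E * (∑ j : Fin 3, ζhat j * ζ j) + E * (∑ j : Fin 3, (c j : ℂ) * ζ j)
        + E * (∑ j : Fin 3, (b j : ℂ) * ζhat j) := by
    rw [Finset.mul_sum, Finset.mul_sum, Finset.mul_sum, ← Finset.sum_add_distrib,
      ← Finset.sum_add_distrib]
    apply Finset.sum_congr rfl; intro j _; ring
  rw [expand, S1, S2, S3]
  push_cast
  ring
end

section
/- For real numbers s, t with s² + t² ≠ 0, and ζ⁽¹⁾ = i(s,0,t) + (−t,0,s), ζ⁽²⁾ = i(s,0,t) − (−t,0,s), a = (0,1,0), and C a transversely isotropic tensor (satisfying the linear relations of transverse isotropy), the algebraic quantity C_{ijkl} a_i ζ⁽¹⁾_j a_k ζ⁽²⁾_l equals −(s²+t²)(C_{1212} + C_{1313}). -/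
open Complex

/-- The symmetry group generators of transverse isotropy with axis x₃. -/
def TIGroup : Set (Matrix (Fin 3) (Fin 3) ℝ) :=
  {Matrix.diagonal ![-1, 1, 1], Matrix.diagonal ![1, -1, 1], Matrix.diagonal ![1, 1, -1]}
    ∪ {Q | ∃ θ : ℝ, θ ∈ Set.Icc 0 (2 * Real.pi) ∧
        Q = !![Real.cos θ, -Real.sin θ, 0; Real.sin θ, Real.cos θ, 0; 0, 0, 1]}

/-- for s² + t² ≠ 0, ζ⁽¹⁾ = i(s,0,t)+(−t,0,s),
ζ⁽²⁾ = i(s,0,t)−(−t,0,s), a = (0,1,0) and C transversely isotropic (axis x₃),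
one has C_{ijkl} a_i ζ⁽¹⁾_j a_k ζ⁽²⁾_l = −(s²+t²)(C₁₂₁₂ + C₁₃₁₃). -/
theorem stmt_10 (s t : ℝ) (hst : s ^ 2 + t ^ 2 ≠ 0)
    (C : Fin 3 → Fin 3 → Fin 3 → Fin 3 → ℝ)
    (hsym1 : ∀ i j k l, C i j k l = C j i k l)
    (hsym2 : ∀ i j k l, C i j k l = C k l i j)
    (hinv : ∀ Q ∈ TIGroup, ∀ i j k l : Fin 3,
      (∑ p : Fin 3, ∑ q : Fin 3, ∑ r : Fin 3, ∑ s' : Fin 3,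
        Q i p * Q j q * Q k r * Q l s' * C p q r s') = C i j k l)
    (ζ1 ζ2 a : Fin 3 → ℂ)
    (hζ1 : ζ1 = ![Complex.I * s - t, 0, Complex.I * t + s])
    (hζ2 : ζ2 = ![Complex.I * s + t, 0, Complex.I * t - s])
    (ha : a = ![0, 1, 0]) :
    (∑ i : Fin 3, ∑ j : Fin 3, ∑ k : Fin 3, ∑ l : Fin 3,
        (C i j k l : ℂ) * a i * ζ1 j * a k * ζ2 l)
      = -((s ^ 2 + t ^ 2 : ℝ) : ℂ) * ((C 0 1 0 1 : ℝ) + (C 0 2 0 2 : ℝ)) := by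
  have hQ : Matrix.diagonal ![(1:ℝ),1,-1] ∈ TIGroup := by
    left; right; right; rfl
  have h102 : C 1 0 1 2 = 0 := by
    have h1 := hinv _ hQ 1 0 1 2
    simp [Fin.sum_univ_three, Matrix.diagonal_apply, Fin.ext_iff] at h1
    linarith
  have h120 : C 1 2 1 0 = 0 := by
    have h1 := hinv _ hQ 1 2 1 0
    simp [Fin.sum_univ_three, Matrix.diagonal_apply, Fin.ext_iff] at h1
    linarith
  have e1 : C 1 0 1 0 = C 0 1 0 1 := by
    rw [hsym1 1 0 1 0, hsym2 0 1 1 0, hsym1 1 0 0 1]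
  have e2 : C 1 2 1 2 = C 0 2 0 2 := by
    have h1 := hinv _ (show !![Real.cos (Real.pi/2), -Real.sin (Real.pi/2), 0; Real.sin (Real.pi/2), Real.cos (Real.pi/2), 0; 0, 0, 1] ∈ TIGroup from Or.inr ⟨Real.pi/2, ⟨by positivity, by nlinarith [Real.pi_pos]⟩, rfl⟩) 1 2 1 2
    simp [Fin.sum_univ_three] at h1
    linarith
  subst hζ1 hζ2 ha
  simp only [Fin.sum_univ_three, Matrix.cons_val_zero, Matrix.cons_val_one, Matrix.head_cons,
    Matrix.cons_val_two, Matrix.tail_cons]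
  rw [h102, h120, e1, e2]
  push_cast
  ring_nf
  simp [Complex.I_sq]
  ring
end

section
/- For real s,t with s²+t² ≠ 0 and ζ⁽¹⁾ = i(s,0,t)+(−t,0,s), ζ⁽²⁾ = i(s,0,t)−(−t,0,s), and C transversely isotropic with axis x₃, the quantity C_{ijkl} ζ⁽¹⁾_i ζ⁽¹⁾_j ζ⁽²⁾_k ζ⁽²⁾_l equals (s²+t²)² (C_{1111} − 2C_{1133} + 4C_{1313} + C_{3333}). -/
open Complex

/-- for s² + t² ≠ 0, ζ⁽¹⁾ = i(s,0,t)+(−t,0,s),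
ζ⁽²⁾ = i(s,0,t)−(−t,0,s) and C transversely isotropic (axis x₃) with the
elastic symmetries, one has
C_{ijkl} ζ⁽¹⁾_i ζ⁽¹⁾_j ζ⁽²⁾_k ζ⁽²⁾_l = (s²+t²)²(C₁₁₁₁ − 2C₁₁₃₃ + 4C₁₃₁₃ + C₃₃₃₃). -/
theorem stmt_11 (s t : ℝ) (hst : s ^ 2 + t ^ 2 ≠ 0)
    (C : Fin 3 → Fin 3 → Fin 3 → Fin 3 → ℝ)
    (hsym1 : ∀ i j k l, C i j k l = C j i k l)
    (hsym2 : ∀ i j k l, C i j k l = C k l i j)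
    (hinv : ∀ Q ∈ TIGroup, ∀ i j k l : Fin 3,
      (∑ p : Fin 3, ∑ q : Fin 3, ∑ r : Fin 3, ∑ s' : Fin 3,
        Q i p * Q j q * Q k r * Q l s' * C p q r s') = C i j k l)
    (ζ1 ζ2 : Fin 3 → ℂ)
    (hζ1 : ζ1 = ![Complex.I * s - t, 0, Complex.I * t + s])
    (hζ2 : ζ2 = ![Complex.I * s + t, 0, Complex.I * t - s]) :
    (∑ i : Fin 3, ∑ j : Fin 3, ∑ k : Fin 3, ∑ l : Fin 3,
        (C i j k l : ℂ) * ζ1 i * ζ1 j * ζ2 k * ζ2 l)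
      = (((s ^ 2 + t ^ 2) ^ 2 : ℝ) : ℂ)
          * ((C 0 0 0 0 - 2 * C 0 0 2 2 + 4 * C 0 2 0 2 + C 2 2 2 2 : ℝ) : ℂ) := by
  have hmem : Matrix.diagonal ![-1,1,1] ∈ TIGroup := Or.inl (by left; rfl)
  have z1 : C 0 0 0 2 = 0 := by
    have h := hinv _ hmem 0 0 0 2; simp [Fin.sum_univ_three, Matrix.diagonal] at h; linarith
  have z2 : C 0 0 2 0 = 0 := by
    have h := hinv _ hmem 0 0 2 0; simp [Fin.sum_univ_three, Matrix.diagonal] at h; linarith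
  have z3 : C 0 2 0 0 = 0 := by
    have h := hinv _ hmem 0 2 0 0; simp [Fin.sum_univ_three, Matrix.diagonal] at h; linarith
  have z4 : C 2 0 0 0 = 0 := by
    have h := hinv _ hmem 2 0 0 0; simp [Fin.sum_univ_three, Matrix.diagonal] at h; linarith
  have z5 : C 0 2 2 2 = 0 := by
    have h := hinv _ hmem 0 2 2 2; simp [Fin.sum_univ_three, Matrix.diagonal] at h; linarith
  have z6 : C 2 0 2 2 = 0 := by
    have h := hinv _ hmem 2 0 2 2; simp [Fin.sum_univ_three, Matrix.diagonal] at h; linarith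
  have z7 : C 2 2 0 2 = 0 := by
    have h := hinv _ hmem 2 2 0 2; simp [Fin.sum_univ_three, Matrix.diagonal] at h; linarith
  have z8 : C 2 2 2 0 = 0 := by
    have h := hinv _ hmem 2 2 2 0; simp [Fin.sum_univ_three, Matrix.diagonal] at h; linarith
  have e1 : C 2 2 0 0 = C 0 0 2 2 := hsym2 2 2 0 0
  have e2 : C 2 0 0 2 = C 0 2 0 2 := hsym1 2 0 0 2
  have e3 : C 0 2 2 0 = C 0 2 0 2 := (hsym2 0 2 2 0).trans e2
  have e4 : C 2 0 2 0 = C 0 2 0 2 := (hsym1 2 0 2 0).trans e3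
  subst hζ1 hζ2
  simp only [Fin.sum_univ_three, Matrix.cons_val_zero, Matrix.cons_val_one, Matrix.head_cons,
    Matrix.cons_val_two, Matrix.tail_cons, z1, z2, z3, z4, z5, z6, z7, z8, e1, e2, e3, e4,
    Complex.ofReal_zero, zero_mul, mul_zero, add_zero, zero_add]
  push_cast
  ring_nf
  simp only [Complex.I_sq, Complex.I_pow_four]
  ring
end

section
/- Suppose C is a transversely isotropic tensor field whose components satisfy C₁₃₁₃ = C₁₂₁₂ = 0, C₁₁₁₁ = C₁₁₂₂, and 2C₁₁₃₃ = C₁₁₂₂ + C₃₃₃₃ pointwise. Then for any differentiable vector fields u, v: ℝ³ → ℂ³, the bilinear form C_{ijkl} ∂_i u_j ∂_k v_l equals C₁₁₁₁ (∇·u)(∇·v) + (C₁₁₃₃ − C₁₁₁₁)((∇·u) ∂₃v₃ + ∂₃u₃ (∇·v)). -/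
open Complex

/-- for a transversely isotropic tensor field C with
C₁₃₁₃ = C₁₂₁₂ = 0, C₁₁₁₁ = C₁₁₂₂ and 2C₁₁₃₃ = C₁₁₂₂ + C₃₃₃₃ pointwise, and
differentiable u, v : ℝ³ → ℂ³, the bilinear form C_{ijkl} ∂_i u_j ∂_k v_l
equals C₁₁₁₁(∇·u)(∇·v) + (C₁₁₃₃ − C₁₁₁₁)((∇·u)∂₃v₃ + ∂₃u₃(∇·v)).
(Indices 1,2,3 correspond to 0,1,2 : Fin 3.) -/
theorem stmt_15 (C : (Fin 3 → ℝ) → Fin 3 → Fin 3 → Fin 3 → Fin 3 → ℝ)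
    (hsym1 : ∀ x i j k l, C x i j k l = C x j i k l)
    (hsym2 : ∀ x i j k l, C x i j k l = C x k l i j)
    -- only the transversely isotropic components are nonzero
    (hodd : ∀ x, ∀ i j k l : Fin 3,
      (∃ m : Fin 3, ¬ Even (([i, j, k, l] : List (Fin 3)).count m)) → C x i j k l = 0)
    (hti1 : ∀ x, C x 1 1 1 1 = C x 0 0 0 0)
    (hti2 : ∀ x, C x 1 1 2 2 = C x 0 0 2 2)
    (hti3 : ∀ x, C x 1 2 1 2 = C x 0 2 0 2)
    (hti4 : ∀ x, C x 0 1 0 1 = (C x 0 0 0 0 - C x 0 0 1 1) / 2)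
    -- the relations obtained from the CGO solutions
    (h1 : ∀ x, C x 0 2 0 2 = 0)
    (h2 : ∀ x, C x 0 1 0 1 = 0)
    (h3 : ∀ x, C x 0 0 0 0 = C x 0 0 1 1)
    (h4 : ∀ x, 2 * C x 0 0 2 2 = C x 0 0 1 1 + C x 2 2 2 2)
    (u v : (Fin 3 → ℝ) → Fin 3 → ℂ)
    (hu : ∀ j, Differentiable ℝ (fun x => u x j))
    (hv : ∀ j, Differentiable ℝ (fun x => v x j)) :
    ∀ x : Fin 3 → ℝ,
      (∑ i : Fin 3, ∑ j : Fin 3, ∑ k : Fin 3, ∑ l : Fin 3,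
          (C x i j k l : ℂ) * pd i (fun y => u y j) x * pd k (fun y => v y l) x)
        = (C x 0 0 0 0 : ℂ) * (∑ j : Fin 3, pd j (fun y => u y j) x)
              * (∑ j : Fin 3, pd j (fun y => v y j) x)
          + ((C x 0 0 2 2 : ℝ) - (C x 0 0 0 0 : ℝ) : ℝ)
              * ((∑ j : Fin 3, pd j (fun y => u y j) x) * pd 2 (fun y => v y 2) x
                + pd 2 (fun y => u y 2) x * (∑ j : Fin 3, pd j (fun y => v y j) x)) := by
  intro x
  have z0001 : C x 0 0 0 1 = 0 := hodd x 0 0 0 1 (by decide)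
  have z0002 : C x 0 0 0 2 = 0 := hodd x 0 0 0 2 (by decide)
  have z0010 : C x 0 0 1 0 = 0 := hodd x 0 0 1 0 (by decide)
  have z0012 : C x 0 0 1 2 = 0 := hodd x 0 0 1 2 (by decide)
  have z0020 : C x 0 0 2 0 = 0 := hodd x 0 0 2 0 (by decide)
  have z0021 : C x 0 0 2 1 = 0 := hodd x 0 0 2 1 (by decide)
  have z0100 : C x 0 1 0 0 = 0 := hodd x 0 1 0 0 (by decide)
  have z0102 : C x 0 1 0 2 = 0 := hodd x 0 1 0 2 (by decide)
  have z0111 : C x 0 1 1 1 = 0 := hodd x 0 1 1 1 (by decide)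
  have z0112 : C x 0 1 1 2 = 0 := hodd x 0 1 1 2 (by decide)
  have z0120 : C x 0 1 2 0 = 0 := hodd x 0 1 2 0 (by decide)
  have z0121 : C x 0 1 2 1 = 0 := hodd x 0 1 2 1 (by decide)
  have z0122 : C x 0 1 2 2 = 0 := hodd x 0 1 2 2 (by decide)
  have z0200 : C x 0 2 0 0 = 0 := hodd x 0 2 0 0 (by decide)
  have z0201 : C x 0 2 0 1 = 0 := hodd x 0 2 0 1 (by decide)
  have z0210 : C x 0 2 1 0 = 0 := hodd x 0 2 1 0 (by decide)
  have z0211 : C x 0 2 1 1 = 0 := hodd x 0 2 1 1 (by decide)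
  have z0212 : C x 0 2 1 2 = 0 := hodd x 0 2 1 2 (by decide)
  have z0221 : C x 0 2 2 1 = 0 := hodd x 0 2 2 1 (by decide)
  have z0222 : C x 0 2 2 2 = 0 := hodd x 0 2 2 2 (by decide)
  have z1000 : C x 1 0 0 0 = 0 := hodd x 1 0 0 0 (by decide)
  have z1002 : C x 1 0 0 2 = 0 := hodd x 1 0 0 2 (by decide)
  have z1011 : C x 1 0 1 1 = 0 := hodd x 1 0 1 1 (by decide)
  have z1012 : C x 1 0 1 2 = 0 := hodd x 1 0 1 2 (by decide)
  have z1020 : C x 1 0 2 0 = 0 := hodd x 1 0 2 0 (by decide)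
  have z1021 : C x 1 0 2 1 = 0 := hodd x 1 0 2 1 (by decide)
  have z1022 : C x 1 0 2 2 = 0 := hodd x 1 0 2 2 (by decide)
  have z1101 : C x 1 1 0 1 = 0 := hodd x 1 1 0 1 (by decide)
  have z1102 : C x 1 1 0 2 = 0 := hodd x 1 1 0 2 (by decide)
  have z1110 : C x 1 1 1 0 = 0 := hodd x 1 1 1 0 (by decide)
  have z1112 : C x 1 1 1 2 = 0 := hodd x 1 1 1 2 (by decide)
  have z1120 : C x 1 1 2 0 = 0 := hodd x 1 1 2 0 (by decide)
  have z1121 : C x 1 1 2 1 = 0 := hodd x 1 1 2 1 (by decide)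
  have z1200 : C x 1 2 0 0 = 0 := hodd x 1 2 0 0 (by decide)
  have z1201 : C x 1 2 0 1 = 0 := hodd x 1 2 0 1 (by decide)
  have z1202 : C x 1 2 0 2 = 0 := hodd x 1 2 0 2 (by decide)
  have z1210 : C x 1 2 1 0 = 0 := hodd x 1 2 1 0 (by decide)
  have z1211 : C x 1 2 1 1 = 0 := hodd x 1 2 1 1 (by decide)
  have z1220 : C x 1 2 2 0 = 0 := hodd x 1 2 2 0 (by decide)
  have z1222 : C x 1 2 2 2 = 0 := hodd x 1 2 2 2 (by decide)
  have z2000 : C x 2 0 0 0 = 0 := hodd x 2 0 0 0 (by decide)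
  have z2001 : C x 2 0 0 1 = 0 := hodd x 2 0 0 1 (by decide)
  have z2010 : C x 2 0 1 0 = 0 := hodd x 2 0 1 0 (by decide)
  have z2011 : C x 2 0 1 1 = 0 := hodd x 2 0 1 1 (by decide)
  have z2012 : C x 2 0 1 2 = 0 := hodd x 2 0 1 2 (by decide)
  have z2021 : C x 2 0 2 1 = 0 := hodd x 2 0 2 1 (by decide)
  have z2022 : C x 2 0 2 2 = 0 := hodd x 2 0 2 2 (by decide)
  have z2100 : C x 2 1 0 0 = 0 := hodd x 2 1 0 0 (by decide)
  have z2101 : C x 2 1 0 1 = 0 := hodd x 2 1 0 1 (by decide)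
  have z2102 : C x 2 1 0 2 = 0 := hodd x 2 1 0 2 (by decide)
  have z2110 : C x 2 1 1 0 = 0 := hodd x 2 1 1 0 (by decide)
  have z2111 : C x 2 1 1 1 = 0 := hodd x 2 1 1 1 (by decide)
  have z2120 : C x 2 1 2 0 = 0 := hodd x 2 1 2 0 (by decide)
  have z2122 : C x 2 1 2 2 = 0 := hodd x 2 1 2 2 (by decide)
  have z2201 : C x 2 2 0 1 = 0 := hodd x 2 2 0 1 (by decide)
  have z2202 : C x 2 2 0 2 = 0 := hodd x 2 2 0 2 (by decide)
  have z2210 : C x 2 2 1 0 = 0 := hodd x 2 2 1 0 (by decide)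
  have z2212 : C x 2 2 1 2 = 0 := hodd x 2 2 1 2 (by decide)
  have z2220 : C x 2 2 2 0 = 0 := hodd x 2 2 2 0 (by decide)
  have z2221 : C x 2 2 2 1 = 0 := hodd x 2 2 2 1 (by decide)
  have z0101 : C x 0 1 0 1 = 0 := h2 x
  have z1001 : C x 1 0 0 1 = 0 := (hsym1 x 1 0 0 1).trans z0101
  have z0110 : C x 0 1 1 0 = 0 := (hsym2 x 0 1 1 0).trans z1001
  have z1010 : C x 1 0 1 0 = 0 := (hsym1 x 1 0 1 0).trans z0110
  have z0202 : C x 0 2 0 2 = 0 := h1 x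
  have z2002 : C x 2 0 0 2 = 0 := (hsym1 x 2 0 0 2).trans z0202
  have z0220 : C x 0 2 2 0 = 0 := (hsym2 x 0 2 2 0).trans z2002
  have z2020 : C x 2 0 2 0 = 0 := (hsym1 x 2 0 2 0).trans z0220
  have z1212 : C x 1 2 1 2 = 0 := (hti3 x).trans z0202
  have z2112 : C x 2 1 1 2 = 0 := (hsym1 x 2 1 1 2).trans z1212
  have z1221 : C x 1 2 2 1 = 0 := (hsym2 x 1 2 2 1).trans z2112
  have z2121 : C x 2 1 2 1 = 0 := (hsym1 x 2 1 2 1).trans z1221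
  have e0011 : C x 0 0 1 1 = C x 0 0 0 0 := (h3 x).symm
  have e1100 : C x 1 1 0 0 = C x 0 0 0 0 := (hsym2 x 1 1 0 0).trans e0011
  have e1111 : C x 1 1 1 1 = C x 0 0 0 0 := hti1 x
  have e2222 : C x 2 2 2 2 = 2 * C x 0 0 2 2 - C x 0 0 0 0 := by
    have a4 := h4 x; have a3 := h3 x; linarith
  have e2200 : C x 2 2 0 0 = C x 0 0 2 2 := hsym2 x 2 2 0 0
  have e1122 : C x 1 1 2 2 = C x 0 0 2 2 := hti2 x
  have e2211 : C x 2 2 1 1 = C x 0 0 2 2 := (hsym2 x 2 2 1 1).trans e1122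
  simp only [Fin.sum_univ_three, z0001, z0002, z0010, z0012, z0020, z0021, z0100, z0102, z0111, z0112, z0120, z0121, z0122, z0200, z0201, z0210, z0211, z0212, z0221, z0222, z1000, z1002, z1011, z1012, z1020, z1021, z1022, z1101, z1102, z1110, z1112, z1120, z1121, z1200, z1201, z1202, z1210, z1211, z1220, z1222, z2000, z2001, z2010, z2011, z2012, z2021, z2022, z2100, z2101, z2102, z2110, z2111, z2120, z2122, z2201, z2202, z2210, z2212, z2220, z2221, z0101, z1010, z0110, z1001, z0202, z2020, z0220, z2002, z1212, z2121, z1221, z2112, e0011, e1100, e1111, e2222, e2200, e1122, e2211]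
  push_cast
  ring
end
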